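/- The 𝔠𝔩𝔰-module M'_{a,b,c} (with L_i _λ x = cⁱ(∂+aλ+b)x, L_i _λ y = cⁱ(∂+(a−1/2)λ+b)y, G_i _λ x = cⁱ(∂+(2a−1)λ+b)y, G_i _λ y = cⁱx) is irreducible if and only if a ≠ 1/2; and when a = 1/2, ℂ[∂]x ⊕ ℂ[∂](∂+b)y is its unique nontrivial proper submodule. -/
import Mathlib


open Polynomial

/-- `ℂ[∂]`. -/
abbrev P := Polynomial ℂ
/-- The free `ℂ[∂]`-module `V = ℂ[∂]x ⊕ ℂ[∂]y`: the first component is the coefficient of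
the even generator `x`, the second that of the odd generator `y`. -/
abbrev V := P × P

/-- Substitution `∂ ↦ ∂ + λ`. -/
noncomputable def sh (l : ℂ) (f : P) : P := f.comp (Polynomial.X + Polynomial.C l)

/-- The action of `∂` on `V`. -/
noncomputable def dV (v : V) : V := (Polynomial.X * v.1, Polynomial.X * v.2)

/-- The `λ`-action of `L_i` on `M_{a,b,c}`:
`L_i ₗ x = cⁱ(∂+aλ+b)x`, `L_i ₗ y = cⁱ(∂+(a+1/2)λ+b)y`, extended by
`L_i ₗ (f(∂)v) = f(∂+λ) L_i ₗ v`. -/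
noncomputable def LM (a b c : ℂ) (i : ℤ) (l : ℂ) (v : V) : V :=
  (Polynomial.C (c ^ i) * sh l v.1 * (Polynomial.X + Polynomial.C (a*l + b)),
   Polynomial.C (c ^ i) * sh l v.2 * (Polynomial.X + Polynomial.C ((a + 1/2)*l + b)))

/-- The `λ`-action of `G_i` on `M_{a,b,c}`:
`G_i ₗ x = cⁱ y`, `G_i ₗ y = cⁱ(∂+2aλ+b)x`. -/
noncomputable def GM (a b c : ℂ) (i : ℤ) (l : ℂ) (v : V) : V :=
  (Polynomial.C (c ^ i) * sh l v.2 * (Polynomial.X + Polynomial.C (2*a*l + b)),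
   Polynomial.C (c ^ i) * sh l v.1)

/-- The `λ`-action of `L_i` on `M'_{a,b,c}`:
`L_i ₗ x = cⁱ(∂+aλ+b)x`, `L_i ₗ y = cⁱ(∂+(a−1/2)λ+b)y`. -/
noncomputable def LM' (a b c : ℂ) (i : ℤ) (l : ℂ) (v : V) : V :=
  (Polynomial.C (c ^ i) * sh l v.1 * (Polynomial.X + Polynomial.C (a*l + b)),
   Polynomial.C (c ^ i) * sh l v.2 * (Polynomial.X + Polynomial.C ((a - 1/2)*l + b)))

/-- The `λ`-action of `G_i` on `M'_{a,b,c}`: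
`G_i ₗ x = cⁱ(∂+(2a−1)λ+b)y`, `G_i ₗ y = cⁱ x`. -/
noncomputable def GM' (a b c : ℂ) (i : ℤ) (l : ℂ) (v : V) : V :=
  (Polynomial.C (c ^ i) * sh l v.2,
   Polynomial.C (c ^ i) * sh l v.1 * (Polynomial.X + Polynomial.C ((2*a - 1)*l + b)))

/-- `S` is a `𝔠𝔩𝔰`-submodule of `M'_{a,b,c}`: a `ℂ`-subspace closed under `∂` and under all
`λ`-actions of the `L_i` and `G_i`. -/
def IsSubM' (a b c : ℂ) (S : Submodule ℂ V) : Prop :=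
  (∀ v ∈ S, dV v ∈ S) ∧
  ∀ (i : ℤ) (l : ℂ), ∀ v ∈ S, LM' a b c i l v ∈ S ∧ GM' a b c i l v ∈ S

/-- The candidate submodule `ℂ[∂]x ⊕ ℂ[∂](∂+b)y` of `M'_{1/2,b,c}`. -/
noncomputable def NM' (b : ℂ) : Submodule ℂ V :=
  Submodule.comap (LinearMap.snd ℂ P P)
    ((Ideal.span {Polynomial.X + Polynomial.C b}).restrictScalars ℂ)


lemma sh_mul (l : ℂ) (f g : P) : sh l (f * g) = sh l f * sh l g := Polynomial.mul_comp f g _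
lemma sh_C (l k : ℂ) : sh l (C k) = C k := Polynomial.C_comp
lemma sh_zero_poly (l : ℂ) : sh l (0 : P) = 0 := Polynomial.zero_comp
lemma sh_one (l : ℂ) : sh l (1 : P) = 1 := Polynomial.one_comp
lemma sh_at_zero (f : P) : sh 0 f = f := by simp [sh]
lemma sh_linear (l d : ℂ) : sh l (X + C d) = X + C (d + l) := by
  simp [sh, map_add]; ring
lemma sh_sh (l m : ℂ) (f : P) : sh l (sh m f) = sh (m + l) f := by
  unfold sh
  rw [Polynomial.comp_assoc]
  congr 1
  simp [map_add]; ring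
lemma sh_ne_zero (l : ℂ) {f : P} (hf : f ≠ 0) : sh l f ≠ 0 := by
  intro h
  apply hf
  have := congrArg (sh (-l)) h
  rwa [sh_sh, add_neg_cancel, sh_at_zero, sh_zero_poly] at this


lemma pow_mul_mem (S : Submodule ℂ V) (hd : ∀ v ∈ S, dV v ∈ S)
    (n : ℕ) {v : V} (hv : v ∈ S) : ((X:P)^n * v.1, (X:P)^n * v.2) ∈ S := by
  induction n with
  | zero => simpa using hv
  | succ n ih =>
      have h := hd _ ih
      have e : dV ((X:P)^n * v.1, (X:P)^n * v.2)
          = ((X:P)^(n+1) * v.1, (X:P)^(n+1) * v.2) := by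
        simp only [dV, Prod.mk.injEq]
        constructor <;> ring
      rwa [e] at h

lemma poly_mul_mem (S : Submodule ℂ V) (hd : ∀ v ∈ S, dV v ∈ S)
    (p : P) {v : V} (hv : v ∈ S) : (p * v.1, p * v.2) ∈ S := by
  induction p using Polynomial.induction_on' with
  | add p q hp hq =>
      have h := S.add_mem hp hq
      have e : ((p * v.1, p * v.2) : V) + (q * v.1, q * v.2)
          = ((p + q) * v.1, (p + q) * v.2) := by
        simp only [Prod.mk_add_mk, Prod.mk.injEq]
        constructor <;> ring
      rwa [e] at h
  | monomial n k =>
      have h := S.smul_mem k (pow_mul_mem S hd n hv)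
      have e : k • (((X:P)^n * v.1, (X:P)^n * v.2) : V)
          = ((monomial n k : P) * v.1, (monomial n k : P) * v.2) := by
        simp only [Prod.smul_mk, Polynomial.smul_eq_C_mul,
          ← Polynomial.C_mul_X_pow_eq_monomial, Prod.mk.injEq]
        constructor <;> ring
      rwa [e] at h

lemma eq_top_of_units (S : Submodule ℂ V) (hd : ∀ v ∈ S, dV v ∈ S)
    (h1 : ((1,0):V) ∈ S) (h2 : ((0,1):V) ∈ S) : S = ⊤ := by
  rw [Submodule.eq_top_iff']
  intro v
  have a1 := poly_mul_mem S hd v.1 h1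
  have a2 := poly_mul_mem S hd v.2 h2
  have h := S.add_mem a1 a2
  simpa using h

open Polynomial

section Ops
variable {a b c : ℂ} {S : Submodule ℂ V}

lemma memA (hS : IsSubM' a b c S) {v : V} (hv : v ∈ S) (l : ℂ) :
    ((sh l v.1 * (X + C (a*l+b)), sh l v.2 * (X + C ((a-1/2)*l+b))) : V) ∈ S := by
  have h := (hS.2 0 l v hv).1
  simpa [LM', zpow_zero, map_one, one_mul] using h

lemma memG (hS : IsSubM' a b c S) {v : V} (hv : v ∈ S) (l : ℂ) :
    ((sh l v.2, sh l v.1 * (X + C ((2*a-1)*l+b))) : V) ∈ S := by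
  have h := (hS.2 0 l v hv).2
  simpa [GM', zpow_zero, map_one, one_mul] using h

lemma memG0 (hS : IsSubM' a b c S) {v : V} (hv : v ∈ S) :
    ((v.2, v.1 * (X + C b)) : V) ∈ S := by
  have h := memG hS hv 0
  simpa [sh_at_zero, mul_zero, zero_add] using h

lemma memB (hS : IsSubM' a b c S) {v : V} (hv : v ∈ S) (l : ℂ) :
    ((sh l v.1 * (X + C (b + l)), sh l v.2 * (X + C ((2*a-1)*l+b))) : V) ∈ S := by
  have h := memG hS (memG0 hS hv) l
  simpa [sh_mul, sh_linear] using h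

end Ops

open Polynomial

lemma periodic_const (q : P) (h : sh 1 q = q) : q.natDegree = 0 := by
  have heval : ∀ x : ℂ, q.eval (x + 1) = q.eval x := by
    intro x
    conv_rhs => rw [← h]
    simp [sh, eval_comp]
  have hnat : ∀ n : ℕ, q.eval (n : ℂ) = q.eval 0 := by
    intro n
    induction n with
    | zero => norm_num
    | succ n ih => push_cast; rw [heval, ih]
  have hz : q - C (q.eval 0) = 0 := by
    apply Polynomial.eq_zero_of_infinite_isRoot
    apply Set.Infinite.mono (s := Set.range (fun n : ℕ => (n : ℂ)))
    · rintro x ⟨n, rfl⟩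
      simp [Polynomial.IsRoot, hnat n]
    · exact Set.infinite_range_of_injective Nat.cast_injective
  have hqc : q = C (q.eval 0) := by
    have := sub_eq_zero.mp hz
    linear_combination this
  rw [hqc, Polynomial.natDegree_C]

lemma deg_drop {q : P} (hq : q ≠ 0) (h0 : q.natDegree ≠ 0) :
    (sh 1 q - q).natDegree < q.natDegree ∧ sh 1 q - q ≠ 0 := by
  have hne : sh 1 q - q ≠ 0 := by
    intro h
    exact h0 (periodic_const q (sub_eq_zero.mp h))
  have hnd : (sh 1 q).natDegree = q.natDegree := by
    unfold sh
    rw [Polynomial.natDegree_comp, Polynomial.natDegree_X_add_C, mul_one]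
  have hsne : sh 1 q ≠ 0 := sh_ne_zero 1 hq
  have hdeg : (sh 1 q).degree = q.degree := by
    rw [Polynomial.degree_eq_natDegree hsne, Polynomial.degree_eq_natDegree hq, hnd]
  have hlc : (sh 1 q).leadingCoeff = q.leadingCoeff := by
    unfold sh
    rw [Polynomial.leadingCoeff_comp
      (by rw [Polynomial.natDegree_X_add_C]; exact one_ne_zero)]
    rw [(Polynomial.monic_X_add_C (1:ℂ)).leadingCoeff, one_pow, mul_one]
  have hlt := Polynomial.degree_sub_lt hdeg hsne hlc
  rw [hdeg] at hlt
  exact ⟨Polynomial.natDegree_lt_natDegree hne hlt, hne⟩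

lemma one_mem_aux (T : P → Prop)
    (hsub : ∀ p q, T p → T q → T (p - q))
    (hsmul : ∀ (k : ℂ) p, T p → T (k • p))
    (hsh : ∀ (l : ℂ) p, T p → T (sh l p)) :
    ∀ (n : ℕ) (q : P), q.natDegree ≤ n → q ≠ 0 → T q → T 1 := by
  intro n
  induction n with
  | zero =>
      intro q hdeg hq0 hq
      have hC : q = C (q.coeff 0) := Polynomial.eq_C_of_natDegree_le_zero hdeg
      have hk : q.coeff 0 ≠ 0 := by
        intro h; apply hq0; rw [hC, h, map_zero]
      have h := hsmul (q.coeff 0)⁻¹ q hq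
      have e : (q.coeff 0)⁻¹ • q = 1 := by
        rw [hC]
        simp [Polynomial.smul_C, smul_eq_mul, inv_mul_cancel₀ hk]
      rwa [e] at h
  | succ n ih =>
      intro q hdeg hq0 hq
      by_cases h0 : q.natDegree = 0
      · exact ih q (h0 ▸ Nat.zero_le n) hq0 hq
      · obtain ⟨hlt, hne⟩ := deg_drop hq0 h0
        exact ih (sh 1 q - q) (by omega) hne (hsub _ _ (hsh 1 q hq) hq)

open Polynomial

section JStuff
variable {a b c : ℂ} {S : Submodule ℂ V}

lemma memJ_shift (ha : a ≠ 1/2) (hS : IsSubM' a b c S) {q : P}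
    (hq : ((0, q) : V) ∈ S) (l : ℂ) : ((0, sh l q) : V) ∈ S := by
  rcases eq_or_ne l 0 with rfl | hl
  · simpa [sh_at_zero] using hq
  · have he := S.sub_mem (memB hS hq l) (memA hS hq l)
    have e1 : ((sh l ((0,q):V).1 * (X + C (b + l)),
          sh l ((0,q):V).2 * (X + C ((2*a-1)*l+b))) : V)
        - (sh l ((0,q):V).1 * (X + C (a*l+b)), sh l ((0,q):V).2 * (X + C ((a-1/2)*l+b)))
        = ((0, sh l q * C ((a-1/2)*l)) : V) := by
      simp only [Prod.mk_sub_mk, Prod.mk.injEq, sh_zero_poly]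
      constructor
      · ring
      · rw [show (2*a-1)*l + b = ((a-1/2)*l + b) + (a-1/2)*l from by ring, map_add]
        ring
    rw [e1] at he
    have hm : (a-1/2)*l ≠ 0 := mul_ne_zero (sub_ne_zero.mpr ha) hl
    have h2 := S.smul_mem ((a-1/2)*l)⁻¹ he
    have e2 : ((a-1/2)*l)⁻¹ • ((0, sh l q * C ((a-1/2)*l)) : V) = ((0, sh l q) : V) := by
      simp only [Prod.smul_mk, smul_zero, Prod.mk.injEq]
      refine ⟨trivial, ?_⟩
      rw [Polynomial.smul_eq_C_mul, mul_comm (sh l q), ← mul_assoc, ← map_mul,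
        inv_mul_cancel₀ hm, map_one, one_mul]
    rwa [e2] at h2

lemma memJ_nonzero (hS : IsSubM' a b c S) {v : V} (hv : v ∈ S) (hg : v.2 ≠ 0) :
    ∃ q : P, q ≠ 0 ∧ ((0, q) : V) ∈ S := by
  have hA := memA hS hv 1
  have hB := memB hS hv 1
  have hw := S.sub_mem hB hA
  have e1 : ((sh 1 v.1 * (X + C (b + 1)), sh 1 v.2 * (X + C ((2*a-1)*1+b))) : V)
      - (sh 1 v.1 * (X + C (a*1+b)), sh 1 v.2 * (X + C ((a-1/2)*1+b)))
      = ((sh 1 v.1 * C (1-a), sh 1 v.2 * C (a-1/2)) : V) := by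
    simp only [Prod.mk_sub_mk, Prod.mk.injEq]
    constructor
    · rw [show b + 1 = (a*1+b) + (1-a) from by ring, map_add]
      ring
    · rw [show (2*a-1)*1 + b = ((a-1/2)*1+b) + (a-1/2) from by ring, map_add]
      ring
  rw [e1] at hw
  have hu := S.sub_mem (S.smul_mem (1-a) hB)
    (poly_mul_mem S hS.1 (X + C (b + 1)) hw)
  set r : P := C (1-a) * (X + C ((2*a-1)*1+b)) - C (a-1/2) * (X + C (b + 1)) with hr
  have e2 : (1-a) • ((sh 1 v.1 * (X + C (b + 1)), sh 1 v.2 * (X + C ((2*a-1)*1+b))) : V)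
      - ((X + C (b + 1)) * (sh 1 v.1 * C (1-a)), (X + C (b + 1)) * (sh 1 v.2 * C (a-1/2)))
      = ((0, sh 1 v.2 * r) : V) := by
    simp only [Prod.smul_mk, Prod.mk_sub_mk, Prod.mk.injEq, Polynomial.smul_eq_C_mul, hr]
    constructor <;> ring
  rw [e2] at hu
  refine ⟨sh 1 v.2 * r, mul_ne_zero (sh_ne_zero 1 hg) ?_, hu⟩
  intro hr0
  have hrval : r = C ((1-a) - (a-1/2)) * X
      + C ((1-a)*((2*a-1)*1+b) - (a-1/2)*(b+1)) := by
    rw [hr]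
    simp only [map_sub, map_mul, map_add, map_one, map_ofNat]
    ring
  have hz0 : (C ((1-a) - (a-1/2)) * X
      + C ((1-a)*((2*a-1)*1+b) - (a-1/2)*(b+1)) : P) = 0 := hrval.symm.trans hr0
  have h1 := congrArg (fun p : P => p.coeff 1) hz0
  have h0 := congrArg (fun p : P => p.coeff 0) hz0
  simp only [Polynomial.coeff_add, Polynomial.coeff_C_mul, Polynomial.coeff_X_one,
    Polynomial.coeff_X_zero, Polynomial.coeff_C_zero,
    Polynomial.coeff_C_ne_zero one_ne_zero, Polynomial.coeff_zero,
    mul_one, mul_zero, add_zero, zero_add] at h1 h0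
  have ha34 : a = 3/4 := by linear_combination (-(1:ℂ)/2) * h1
  rw [ha34] at h0
  have h8 : (-1/8 : ℂ) = 0 := by linear_combination h0
  norm_num at h8

end JStuff

open Polynomial

section Irred
variable {a b c : ℂ} {S : Submodule ℂ V}

lemma irred (ha : a ≠ 1/2) (hS : IsSubM' a b c S) (hbot : S ≠ ⊥) : S = ⊤ := by
  obtain ⟨v, hv, hv0⟩ := Submodule.exists_mem_ne_zero_of_ne_bot hbot
  obtain ⟨q, hq0, hqS⟩ : ∃ q : P, q ≠ 0 ∧ ((0, q) : V) ∈ S := by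
    by_cases hg : v.2 = 0
    · have hf : v.1 ≠ 0 := by
        intro h
        exact hv0 (Prod.ext h hg)
      refine ⟨v.1 * (X + C b), mul_ne_zero hf (Polynomial.X_add_C_ne_zero b), ?_⟩
      have h := memG0 hS hv
      rw [hg] at h
      exact h
    · exact memJ_nonzero hS hv hg
  have h01 : ((0, (1:P)) : V) ∈ S := by
    have := one_mem_aux (fun p => ((0, p) : V) ∈ S)
      (fun p q hp hq => by
        have := S.sub_mem hp hq
        simpa [Prod.mk_sub_mk] using this)
      (fun k p hp => by
        have := S.smul_mem k hp
        simpa [Prod.smul_mk] using this)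
      (fun l p hp => memJ_shift ha hS hp l)
      q.natDegree q le_rfl hq0 hqS
    exact this
  have h10 : ((1, 0) : V) ∈ S := by
    have h := memG0 hS h01
    simpa using h
  exact eq_top_of_units S hS.1 h10 h01

end Irred

open Polynomial

section Half
variable {b c : ℂ} {S : Submodule ℂ V}

lemma half_sub_ne (hS : IsSubM' (1/2) b c S) {v : V} (hv : v ∈ S) {l : ℂ}
    (hl : l ≠ 0) : ((sh l v.1, 0) : V) ∈ S := by
  have he := S.sub_mem (memB hS hv l) (memA hS hv l)
  have e1 : ((sh l v.1 * (X + C (b + l)), sh l v.2 * (X + C ((2*(1/2)-1)*l+b))) : V)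
      - (sh l v.1 * (X + C ((1/2)*l+b)), sh l v.2 * (X + C ((1/2-1/2)*l+b)))
      = ((sh l v.1 * C (l/2), 0) : V) := by
    simp only [Prod.mk_sub_mk, Prod.mk.injEq]
    constructor
    · rw [show b + l = ((1/2:ℂ)*l+b) + l/2 from by ring, map_add]
      ring
    · rw [show (2*(1/2:ℂ)-1)*l+b = (1/2-1/2:ℂ)*l+b from by ring]
      ring
  rw [e1] at he
  have h2 := S.smul_mem (l/2)⁻¹ he
  have e2 : (l/2)⁻¹ • ((sh l v.1 * C (l/2), 0) : V) = ((sh l v.1, 0) : V) := by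
    simp only [Prod.smul_mk, smul_zero, Prod.mk.injEq]
    refine ⟨?_, trivial⟩
    rw [Polynomial.smul_eq_C_mul, mul_comm (sh l v.1), ← mul_assoc, ← map_mul,
      inv_mul_cancel₀ (div_ne_zero hl two_ne_zero), map_one, one_mul]
  rwa [e2] at h2

lemma half_fst (hS : IsSubM' (1/2) b c S) {v : V} (hv : v ∈ S) :
    ((v.1, 0) : V) ∈ S := by
  have h1 := half_sub_ne hS hv one_ne_zero
  have h2 := half_sub_ne hS h1 (neg_ne_zero.mpr one_ne_zero)
  have e : sh (-1) (sh 1 v.1) = v.1 := by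
    rw [sh_sh]
    norm_num [sh_at_zero]
  rwa [e] at h2

lemma half_snd (hS : IsSubM' (1/2) b c S) {v : V} (hv : v ∈ S) :
    ((v.2, 0) : V) ∈ S :=
  half_fst hS (memG0 hS hv)

end Half

open Polynomial

lemma mem_NM' (b : ℂ) (w : V) : w ∈ NM' b ↔ (X + C b) ∣ w.2 := by
  simp [NM', Submodule.mem_comap, Ideal.mem_span_singleton]

lemma NM'_sub (b c : ℂ) : IsSubM' (1/2) b c (NM' b) := by
  constructor
  · intro v hv
    rw [mem_NM'] at hv ⊢
    exact Dvd.dvd.mul_left hv X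
  · intro i l v hv
    constructor
    · rw [mem_NM']
      show (X + C b) ∣ C (c ^ i) * sh l v.2 * (X + C ((1/2 - 1/2)*l + b))
      rw [show ((1:ℂ)/2 - 1/2)*l + b = b from by ring]
      exact dvd_mul_left _ _
    · rw [mem_NM']
      show (X + C b) ∣ C (c ^ i) * sh l v.1 * (X + C ((2*(1/2) - 1)*l + b))
      rw [show (2*((1:ℂ)/2) - 1)*l + b = b from by ring]
      exact dvd_mul_left _ _

lemma NM'_ne_bot (b : ℂ) : NM' b ≠ ⊥ := by
  intro h
  have h1 : ((1, 0) : V) ∈ NM' b := by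
    rw [mem_NM']
    exact dvd_zero _
  rw [h, Submodule.mem_bot] at h1
  simp [Prod.ext_iff] at h1

lemma NM'_ne_top (b : ℂ) : NM' b ≠ ⊤ := by
  intro h
  have h1 : ((0, 1) : V) ∈ NM' b := by rw [h]; trivial
  rw [mem_NM'] at h1
  obtain ⟨e, he⟩ := h1
  have := congrArg (Polynomial.eval (-b)) he
  simp at this

open Polynomial

section Uniq
variable {b c : ℂ} {S : Submodule ℂ V}

lemma half_unique (hS : IsSubM' (1/2) b c S) (hbot : S ≠ ⊥) (htop : S ≠ ⊤) :
    S = NM' b := by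
  obtain ⟨v, hv, hv0⟩ := Submodule.exists_mem_ne_zero_of_ne_bot hbot
  -- (1,0) ∈ S
  have hT1 : ((1, 0) : V) ∈ S := by
    obtain ⟨f, hf0, hfS⟩ : ∃ f : P, f ≠ 0 ∧ ((f, 0) : V) ∈ S := by
      by_cases h1 : v.1 = 0
      · have h2 : v.2 ≠ 0 := by
          intro h
          exact hv0 (Prod.ext h1 h)
        exact ⟨v.2, h2, half_snd hS hv⟩
      · exact ⟨v.1, h1, half_fst hS hv⟩
    exact one_mem_aux (fun p => ((p, 0) : V) ∈ S)
      (fun p q hp hq => by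
        have := S.sub_mem hp hq
        simpa [Prod.mk_sub_mk] using this)
      (fun k p hp => by
        have := S.smul_mem k hp
        simpa [Prod.smul_mk] using this)
      (fun l p hp => by
        rcases eq_or_ne l 0 with rfl | hl
        · rwa [sh_at_zero]
        · exact half_sub_ne hS hp hl)
      f.natDegree f le_rfl hf0 hfS
  have hx : ∀ p : P, ((p, 0) : V) ∈ S := fun p => by
    have := poly_mul_mem S hS.1 p hT1
    simpa using this
  have hy : ∀ p : P, ((0, p * (X + C b)) : V) ∈ S := fun p => memG0 hS (hx p)
  apply le_antisymm
  · intro w hw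
    rw [mem_NM']
    by_contra hnd
    apply htop
    have hwS : ((0, w.2) : V) ∈ S := by
      have := S.sub_mem hw (hx w.1)
      have e : w - ((w.1, 0) : V) = ((0, w.2) : V) := by
        have : w = (w.1, w.2) := rfl
        rw [this, Prod.mk_sub_mk]
        simp
      rwa [e] at this
    set k := w.2.eval (-b) with hk
    have hkne : k ≠ 0 := by
      intro h
      apply hnd
      have : (X - C (-b)) ∣ w.2 := Polynomial.dvd_iff_isRoot.mpr h
      simpa [sub_neg_eq_add] using this
    obtain ⟨e, he⟩ : (X + C b) ∣ (w.2 - C k) := by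
      have : (X - C (-b)) ∣ (w.2 - C k) := by
        apply Polynomial.dvd_iff_isRoot.mpr
        simp [Polynomial.IsRoot, hk]
      simpa [sub_neg_eq_add] using this
    have h1 : ((0, C k) : V) ∈ S := by
      have := S.sub_mem hwS (hy e)
      have e2 : ((0, w.2) : V) - ((0, e * (X + C b)) : V) = ((0, C k) : V) := by
        rw [Prod.mk_sub_mk]
        simp only [sub_zero, Prod.mk.injEq]
        refine ⟨trivial, ?_⟩
        have : w.2 - C k = e * (X + C b) := by rw [he]; ring
        linear_combination this
      rwa [e2] at this
    have h01 : ((0, (1:P)) : V) ∈ S := by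
      have := S.smul_mem k⁻¹ h1
      have e3 : k⁻¹ • ((0, C k) : V) = ((0, (1:P)) : V) := by
        simp only [Prod.smul_mk, smul_zero, Prod.mk.injEq]
        refine ⟨trivial, ?_⟩
        rw [Polynomial.smul_C, smul_eq_mul, inv_mul_cancel₀ hkne, map_one]
      rwa [e3] at this
    exact eq_top_of_units S hS.1 hT1 h01
  · intro w hw
    rw [mem_NM'] at hw
    obtain ⟨e, he⟩ := hw
    have := S.add_mem (hx w.1) (hy e)
    have e2 : ((w.1, 0) : V) + ((0, e * (X + C b)) : V) = w := by
      rw [Prod.mk_add_mk]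
      have : w = (w.1, w.2) := rfl
      rw [this]
      simp only [add_zero, zero_add, Prod.mk.injEq]
      exact ⟨trivial, by rw [he]; ring⟩
    rwa [e2] at this

end Uniq


/-- `M'_{a,b,c}` is irreducible iff `a ≠ 1/2`; and when `a = 1/2`,
`ℂ[∂]x ⊕ ℂ[∂](∂+b)y` is the unique nontrivial proper submodule of `M'_{1/2,b,c}`. -/
theorem stmt11 (a b c : ℂ) (hc : c ≠ 0) :
    ((∀ S : Submodule ℂ V, IsSubM' a b c S → S = ⊥ ∨ S = ⊤) ↔ a ≠ 1/2)
    ∧ (a = 1/2 →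
        IsSubM' (1/2) b c (NM' b) ∧ NM' b ≠ ⊥ ∧ NM' b ≠ ⊤ ∧
        ∀ S : Submodule ℂ V, IsSubM' (1/2) b c S → S ≠ ⊥ → S ≠ ⊤ → S = NM' b) := by
  constructor
  · constructor
    · intro h ha
      subst ha
      rcases h (NM' b) (NM'_sub b c) with h1 | h1
      · exact NM'_ne_bot b h1
      · exact NM'_ne_top b h1
    · intro ha S hS
      by_cases hb : S = ⊥
      · exact Or.inl hb
      · exact Or.inr (irred ha hS hb)
  · intro _
    exact ⟨NM'_sub b c, NM'_ne_bot b, NM'_ne_top b,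
      fun S hS h1 h2 => half_unique hS h1 h2⟩
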